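/- Assume the rewards satisfy r_DC > r_CC > r_DD > r_CD, 0 < α < 1 and 0 < γ < 1. Suppose the initial Q-table Q⁰ satisfies Q⁰(s,D) > Q⁰(s,C) for every state s (always-defect greedy policy), together with: (i) r_DD/(1−γ) < Q⁰((D,D),C); (ii) Q⁰((D,D),C) < (γ·r_CC + r_DD)/(1−γ²) < Q⁰((C,C),C) and Q⁰((D,D),D) < Q⁰((C,C),C); (iii) Q⁰((C,C),C) < r_CC/(1−γ). Then for the deterministic self-play greedy Q-learning trajectory started at s₀ = (D,D), there exists a time t₂ such that for all t ≥ t₂ the greedy policy of Qᵗ is Pavlov: Qᵗ((C,C),C) > Qᵗ((C,C),D), Qᵗ((D,D),C) > Qᵗ((D,D),D), Qᵗ((C,D),D) > Qᵗ((C,D),C), and Qᵗ((D,C),D) > Qᵗ((D,C),C). -/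
import Mathlib


inductive Act | C | D
deriving DecidableEq

open Act

abbrev State := Act × Act

/-- The greedy action of a Q-table in a state, ties broken toward D. -/
noncomputable def greedy (Q : State → Act → ℝ) (s : State) : Act :=
  if Q s C > Q s D then C else D

set_option maxHeartbeats 2000000 in
/-- the deterministic self-play greedy Q-learning trajectory started
from an optimistically initialized always-defect Q-table eventually has the Pavlov
greedy policy forever. -/
theorem greedy_qlearning_reaches_pavlov
    (rCC rCD rDC rDD : ℝ)
    (h1 : rDC > rCC) (h2 : rCC > rDD) (h3 : rDD > rCD)
    (r : Act → Act → ℝ)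
    (hrCC : r C C = rCC) (hrCD : r C D = rCD)
    (hrDC : r D C = rDC) (hrDD : r D D = rDD)
    (α γ : ℝ) (hα0 : 0 < α) (hα1 : α < 1) (hγ0 : 0 < γ) (hγ1 : γ < 1)
    (Qt : ℕ → State → Act → ℝ) (s : ℕ → State) (a : ℕ → Act)
    (hs0 : s 0 = (D, D))
    (ha : ∀ t, a t = greedy (Qt t) (s t))
    (hs : ∀ t, s (t + 1) = (a t, a t))
    (hupd : ∀ t, Qt (t + 1) (s t) (a t) =
      Qt t (s t) (a t) + α * (r (a t) (a t)
        + γ * max (Qt t (s (t + 1)) C) (Qt t (s (t + 1)) D) - Qt t (s t) (a t)))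
    (hsame : ∀ t p b, ¬(p = s t ∧ b = a t) → Qt (t + 1) p b = Qt t p b)
    (hAD : ∀ p : State, Qt 0 p D > Qt 0 p C)
    (hi : rDD / (1 - γ) < Qt 0 (D, D) C)
    (hiiA : Qt 0 (D, D) C < (γ * rCC + rDD) / (1 - γ ^ 2))
    (hiiB : (γ * rCC + rDD) / (1 - γ ^ 2) < Qt 0 (C, C) C)
    (hiiC : Qt 0 (D, D) D < Qt 0 (C, C) C)
    (hiii : Qt 0 (C, C) C < rCC / (1 - γ)) :
    ∃ t₂ : ℕ, ∀ t ≥ t₂,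
      Qt t (C, C) C > Qt t (C, C) D ∧ Qt t (D, D) C > Qt t (D, D) D ∧
      Qt t (C, D) D > Qt t (C, D) C ∧ Qt t (D, C) D > Qt t (D, C) C := by
  classical
  have hADcc := hAD (C, C)
  have hADdd := hAD (D, D)
  have hADcd := hAD (C, D)
  have hADdc := hAD (D, C)
  have hγ' : (0:ℝ) < 1 - γ := by linarith
  have hγ2 : (0:ℝ) < 1 - γ ^ 2 := by
    have := pow_lt_one₀ hγ0.le hγ1 (two_ne_zero)
    linarith
  have hγne : (1:ℝ) - γ ≠ 0 := ne_of_gt hγ'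
  have hγ2ne : (1:ℝ) - γ ^ 2 ≠ 0 := ne_of_gt hγ2
  obtain ⟨ρ, hρ⟩ : ∃ ρ : ℝ, ρ = 1 - α * (1 - γ) := ⟨_, rfl⟩
  have hρ0 : 0 < ρ := by
    rw [hρ]
    have e : α * (1 - γ) = α - α * γ := by ring
    linarith [mul_pos hα0 hγ0]
  have hρ1 : ρ < 1 := by rw [hρ]; linarith [mul_pos hα0 hγ']
  obtain ⟨L, hL⟩ : ∃ L : ℝ, L = rDD / (1 - γ) := ⟨_, rfl⟩
  obtain ⟨xs, hxs⟩ : ∃ v : ℝ, v = (rCC + γ * rDD) / (1 - γ ^ 2) := ⟨_, rfl⟩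
  obtain ⟨ys, hys⟩ : ∃ v : ℝ, v = (γ * rCC + rDD) / (1 - γ ^ 2) := ⟨_, rfl⟩
  rw [← hL] at hi
  rw [← hys] at hiiA hiiB
  have hxse : xs = rCC + γ * ys := by rw [hxs, hys]; field_simp; ring
  have hyse : ys = rDD + γ * xs := by rw [hys, hxs]; field_simp; ring
  have hyx : ys < xs := by
    rw [hxs, hys, div_lt_div_iff₀ hγ2 hγ2]
    have e : (rCC + γ * rDD) * (1 - γ ^ 2) - (γ * rCC + rDD) * (1 - γ ^ 2)
        = (1 - γ) * (rCC - rDD) * (1 - γ ^ 2) := by ring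
    linarith [mul_pos (mul_pos hγ' (sub_pos.2 h2)) hγ2, e]
  set x0 : ℝ := Qt 0 (D, D) C with hx0
  set y0 : ℝ := Qt 0 (C, C) D with hy0
  set c0 : ℝ := Qt 0 (C, C) C with hc0
  set d0 : ℝ := Qt 0 (D, D) D with hd0
  have hrL : rDD = (1 - γ) * L := by rw [hL]; field_simp
  have hx0xs : x0 < xs := lt_trans hiiA hyx
  have gC : ∀ (Q : State → Act → ℝ) (p : State), Q p D < Q p C → greedy Q p = C := by
    intro Q p h; unfold greedy; rw [if_pos h]
  have gD : ∀ (Q : State → Act → ℝ) (p : State), Q p C ≤ Q p D → greedy Q p = D := by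
    intro Q p h; unfold greedy; rw [if_neg (not_lt.mpr h)]
  -- Phase 1 : stay in (D,D) while Q((D,D),D) ≥ x0
  have key1 : ∀ t : ℕ, (∀ u, u < t → x0 - L ≤ ρ ^ u * (d0 - L)) →
      s t = (D, D) ∧ (∀ p b, ¬(p = (D, D) ∧ b = D) → Qt t p b = Qt 0 p b) ∧
      Qt t (D, D) D = L + ρ ^ t * (d0 - L) := by
    intro t
    induction t with
    | zero => exact fun _ => ⟨hs0, fun p b _ => rfl, by rw [pow_zero]; ring⟩
    | succ t ih =>
      intro hu
      obtain ⟨hst, hfr, hdt⟩ := ih (fun u hu' => hu u (Nat.lt_succ_of_lt hu'))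
      have hge : x0 ≤ L + ρ ^ t * (d0 - L) := by
        have := hu t (Nat.lt_succ_self t); linarith
      have hxC : Qt t (D, D) C = x0 := hfr _ _ (by decide)
      have hat : a t = D := by
        rw [ha t, hst]; exact gD _ _ (by rw [hxC, hdt]; exact hge)
      have hst1 : s (t + 1) = (D, D) := by rw [hs t, hat]
      refine ⟨hst1, ?_, ?_⟩
      · intro p b hpb
        have hne : ¬(p = s t ∧ b = a t) := by rw [hst, hat]; exact hpb
        rw [hsame t p b hne, hfr p b hpb]
      · have h := hupd t
        rw [hst, hat, hst1, hrDD, hxC, hdt,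
          max_eq_right (by linarith : x0 ≤ L + ρ ^ t * (d0 - L))] at h
        rw [h]
        linear_combination α * hrL - ρ ^ t * (d0 - L) * hρ
  have hd0L : (0:ℝ) < d0 - L := by linarith
  obtain ⟨t1, ht1spec, ht1min⟩ :
      ∃ n : ℕ, ρ ^ n * (d0 - L) < x0 - L ∧ ∀ u, u < n → x0 - L ≤ ρ ^ u * (d0 - L) := by
    have hex1 : ∃ t : ℕ, ρ ^ t * (d0 - L) < x0 - L := by
      obtain ⟨n, hn⟩ := exists_pow_lt_of_lt_one
        (show (0:ℝ) < (x0 - L) / (d0 - L) from div_pos (by linarith) hd0L) hρ1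
      exact ⟨n, (lt_div_iff₀ hd0L).mp hn⟩
    exact ⟨Nat.find hex1, Nat.find_spec hex1,
      fun u hu => le_of_not_gt (Nat.find_min hex1 hu)⟩
  obtain ⟨hs1, hfr1, hd1⟩ := key1 t1 ht1min
  set dv : ℝ := L + ρ ^ t1 * (d0 - L) with hdv
  have hdlt : dv < x0 := by rw [hdv]; linarith
  have hdvL : L < dv := by
    have := mul_pos (pow_pos hρ0 t1) hd0L
    rw [hdv]; linarith
  have hdvxs : dv < xs := by linarith
  have ht1x : Qt t1 (D, D) C = x0 := hfr1 _ _ (by decide)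
  have ht1c : Qt t1 (C, C) C = c0 := hfr1 _ _ (by decide)
  have ht1y : Qt t1 (C, C) D = y0 := hfr1 _ _ (by decide)
  set m0 : ℝ := max |x0 - xs| |y0 - ys| with hm0
  have hm0pos : 0 < m0 :=
    lt_of_lt_of_le (abs_pos.mpr (sub_ne_zero.mpr (ne_of_lt hx0xs))) (le_max_left _ _)
  -- Phase 2 : the (D,D) → (C,C) → (D,D) cycle
  have key2 : ∀ k : ℕ, (∀ j, j < k → c0 ≤ Qt (t1 + 2 * j) (C, C) D) →
      s (t1 + 2 * k) = (D, D) ∧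
      (∀ p b, ¬(p = (D, D) ∧ b = C) → ¬(p = (C, C) ∧ b = D) →
        Qt (t1 + 2 * k) p b = Qt t1 p b) ∧
      dv < Qt (t1 + 2 * k) (D, D) C ∧
      |Qt (t1 + 2 * k) (D, D) C - xs| ≤ ρ ^ k * m0 ∧
      |Qt (t1 + 2 * k) (C, C) D - ys| ≤ ρ ^ k * m0 := by
    intro k
    induction k with
    | zero =>
      intro _
      simp only [Nat.mul_zero, Nat.add_zero]
      refine ⟨hs1, fun p b _ _ => trivial, ?_, ?_, ?_⟩
      · rw [ht1x]; exact hdlt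
      · rw [ht1x, pow_zero, one_mul]; exact le_max_left _ _
      · rw [ht1y, pow_zero, one_mul]; exact le_max_right _ _
    | succ k ih =>
      intro hyk
      obtain ⟨hsk, hfrk, hxk, hxb, hyb⟩ := ih (fun j hj => hyk j (Nat.lt_succ_of_lt hj))
      have hykc : c0 ≤ Qt (t1 + 2 * k) (C, C) D := hyk k (Nat.lt_succ_self k)
      set t := t1 + 2 * k with htdef
      set x : ℝ := Qt t (D, D) C with hxd
      set y : ℝ := Qt t (C, C) D with hyd
      have hcck : Qt t (C, C) C = c0 := by
        rw [hfrk (C, C) C (by decide) (by decide)]; exact ht1c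
      have hddk : Qt t (D, D) D = dv := by
        rw [hfrk (D, D) D (by decide) (by decide)]; exact hd1
      have hat : a t = C := by
        rw [ha t, hsk]
        exact gC _ _ (by rw [hddk]; exact hxk)
      have hst1 : s (t + 1) = (C, C) := by rw [hs t, hat]
      have hupd1 : Qt (t + 1) (D, D) C = x + α * (rCC + γ * y - x) := by
        have h := hupd t
        rw [hsk, hat, hst1, hrCC, hcck] at h
        rw [← hyd, max_eq_right hykc, ← hxd] at h
        exact h
      have hpres1 : ∀ p b, ¬(p = (D, D) ∧ b = C) → Qt (t + 1) p b = Qt t p b :=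
        fun p b hpb => hsame t p b (by rw [hsk, hat]; exact hpb)
      have hcc1 : Qt (t + 1) (C, C) C = c0 := by
        rw [hpres1 (C, C) C (by decide)]; exact hcck
      have hy1 : Qt (t + 1) (C, C) D = y := by
        rw [hpres1 (C, C) D (by decide)]
      have hdd1 : Qt (t + 1) (D, D) D = dv := by
        rw [hpres1 (D, D) D (by decide)]; exact hddk
      have hat1 : a (t + 1) = D := by
        rw [ha (t + 1), hst1]
        exact gD _ _ (by rw [hcc1, hy1]; exact hykc)
      have hst2 : s (t + 1 + 1) = (D, D) := by rw [hs (t + 1), hat1]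
      have hyys : ys < y := lt_of_lt_of_le hiiB hykc
      have hkey : xs < rCC + γ * y := by
        rw [hxse]
        have e : γ * y - γ * ys = γ * (y - ys) := by ring
        linarith [mul_pos hγ0 (sub_pos.2 hyys), e]
      have hx1gt : dv < x + α * (rCC + γ * y - x) := by
        have ha1 : 0 < (1 - α) * (x - dv) := mul_pos (by linarith) (by linarith)
        have ha2 : 0 < α * (rCC + γ * y - dv) := mul_pos hα0 (by linarith)
        have e : x + α * (rCC + γ * y - x) - dv
            = (1 - α) * (x - dv) + α * (rCC + γ * y - dv) := by ring
        linarith [ha1, ha2, e]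
      have hupd2 : Qt (t + 1 + 1) (C, C) D =
          y + α * (rDD + γ * (x + α * (rCC + γ * y - x)) - y) := by
        have h := hupd (t + 1)
        rw [hst1, hat1, hst2, hrDD, hupd1, hdd1,
          max_eq_left (le_of_lt hx1gt), hy1] at h
        exact h
      have hpres2 : ∀ p b, ¬(p = (C, C) ∧ b = D) → Qt (t + 1 + 1) p b = Qt (t + 1) p b :=
        fun p b hpb => hsame (t + 1) p b (by rw [hst1, hat1]; exact hpb)
      have hpk : (0:ℝ) ≤ ρ ^ k * m0 := by positivity
      have hxb' : |x + α * (rCC + γ * y - x) - xs| ≤ ρ ^ (k + 1) * m0 := by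
        have hid : x + α * (rCC + γ * y - x) - xs
            = (1 - α) * (x - xs) + (α * γ) * (y - ys) := by
          linear_combination (-α) * hxse
        rw [hid]
        calc |(1 - α) * (x - xs) + (α * γ) * (y - ys)|
            ≤ |(1 - α) * (x - xs)| + |(α * γ) * (y - ys)| := abs_add_le _ _
          _ = (1 - α) * |x - xs| + (α * γ) * |y - ys| := by
              rw [abs_mul, abs_mul, abs_of_nonneg (by linarith : (0:ℝ) ≤ 1 - α),
                abs_of_nonneg (by positivity : (0:ℝ) ≤ α * γ)]
          _ ≤ (1 - α) * (ρ ^ k * m0) + (α * γ) * (ρ ^ k * m0) :=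
              add_le_add (mul_le_mul_of_nonneg_left hxb (by linarith))
                (mul_le_mul_of_nonneg_left hyb (by positivity))
          _ = ρ ^ (k + 1) * m0 := by rw [pow_succ]; linear_combination (-(ρ ^ k * m0)) * hρ
      have hyb' : |y + α * (rDD + γ * (x + α * (rCC + γ * y - x)) - y) - ys|
          ≤ ρ ^ (k + 1) * m0 := by
        have hid2 : y + α * (rDD + γ * (x + α * (rCC + γ * y - x)) - y) - ys
            = (1 - α) * (y - ys) + (α * γ) * (x + α * (rCC + γ * y - x) - xs) := by
          linear_combination (-α) * hyse
        rw [hid2]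
        have hcoef : (1 - α) + α * γ * ρ ≤ ρ := by
          rw [hρ]
          have e : (1 - α * (1 - γ)) - ((1 - α) + α * γ * (1 - α * (1 - γ)))
              = α * α * γ * (1 - γ) := by ring
          linarith [mul_nonneg (mul_nonneg (mul_nonneg hα0.le hα0.le) hγ0.le) hγ'.le, e]
        calc |(1 - α) * (y - ys) + (α * γ) * (x + α * (rCC + γ * y - x) - xs)|
            ≤ |(1 - α) * (y - ys)| + |(α * γ) * (x + α * (rCC + γ * y - x) - xs)| :=
              abs_add_le _ _
          _ = (1 - α) * |y - ys| + (α * γ) * |x + α * (rCC + γ * y - x) - xs| := by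
              rw [abs_mul, abs_mul, abs_of_nonneg (by linarith : (0:ℝ) ≤ 1 - α),
                abs_of_nonneg (by positivity : (0:ℝ) ≤ α * γ)]
          _ ≤ (1 - α) * (ρ ^ k * m0) + (α * γ) * (ρ ^ (k + 1) * m0) :=
              add_le_add (mul_le_mul_of_nonneg_left hyb (by linarith))
                (mul_le_mul_of_nonneg_left hxb' (by positivity))
          _ ≤ ρ ^ (k + 1) * m0 := by
              rw [pow_succ]
              have hh := mul_le_mul_of_nonneg_right hcoef hpk
              have e1 : ((1 - α) + α * γ * ρ) * (ρ ^ k * m0)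
                  = (1 - α) * (ρ ^ k * m0) + α * γ * (ρ ^ k * ρ * m0) := by ring
              have e2 : ρ * (ρ ^ k * m0) = ρ ^ k * ρ * m0 := by ring
              linarith [hh, e1, e2]
      have hidx : t1 + 2 * (k + 1) = t + 1 + 1 := by omega
      rw [hidx]
      refine ⟨hst2, ?_, ?_, ?_, ?_⟩
      · intro p b hp1 hp2
        rw [hpres2 p b hp2, hpres1 p b hp1, hfrk p b hp1 hp2]
      · rw [hpres2 (D, D) C (by decide), hupd1]; exact hx1gt
      · rw [hpres2 (D, D) C (by decide), hupd1]; exact hxb'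
      · rw [hupd2]; exact hyb'
  -- Phase 2 terminates
  obtain ⟨k2, hylt, hkmin⟩ :
      ∃ k : ℕ, Qt (t1 + 2 * k) (C, C) D < c0 ∧
        ∀ j, j < k → c0 ≤ Qt (t1 + 2 * j) (C, C) D := by
    have hex2 : ∃ k : ℕ, Qt (t1 + 2 * k) (C, C) D < c0 := by
      by_contra hcon
      push_neg at hcon
      obtain ⟨K, hK⟩ : ∃ K : ℕ, ρ ^ K * m0 < c0 - ys := by
        obtain ⟨n, hn⟩ := exists_pow_lt_of_lt_one
          (show (0:ℝ) < (c0 - ys) / m0 from div_pos (by linarith) hm0pos) hρ1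
        exact ⟨n, (lt_div_iff₀ hm0pos).mp hn⟩
      obtain ⟨-, -, -, -, hyK⟩ := key2 K (fun j _ => hcon j)
      have h2 := (abs_le.1 hyK).2
      have h3 := hcon K
      linarith
    exact ⟨Nat.find hex2, Nat.find_spec hex2,
      fun j hj => le_of_not_gt (Nat.find_min hex2 hj)⟩
  obtain ⟨hsk, hfrk, hxk, hxb, hyb⟩ := key2 k2 hkmin
  set T := t1 + 2 * k2 with hT
  -- the transition into (C,C)
  have hccT : Qt T (C, C) C = c0 := by
    rw [hfrk (C, C) C (by decide) (by decide)]; exact ht1c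
  have hddT : Qt T (D, D) D = dv := by
    rw [hfrk (D, D) D (by decide) (by decide)]; exact hd1
  have haT : a T = C := by
    rw [ha T, hsk]; exact gC _ _ (by rw [hddT]; exact hxk)
  have hsT1 : s (T + 1) = (C, C) := by rw [hs T, haT]
  have hupdT : Qt (T + 1) (D, D) C =
      Qt T (D, D) C + α * (rCC + γ * c0 - Qt T (D, D) C) := by
    have h := hupd T
    rw [hsk, haT, hsT1, hrCC, hccT, max_eq_left (le_of_lt hylt)] at h
    exact h
  have hpresT : ∀ p b, ¬(p = (D, D) ∧ b = C) → Qt (T + 1) p b = Qt T p b :=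
    fun p b hpb => hsame T p b (by rw [hsk, haT]; exact hpb)
  have hkeyT : xs < rCC + γ * c0 := by
    rw [hxse]
    have e : γ * c0 - γ * ys = γ * (c0 - ys) := by ring
    linarith [mul_pos hγ0 (sub_pos.2 hiiB), e]
  have hxT1 : dv < Qt (T + 1) (D, D) C := by
    rw [hupdT]
    have ha1 : 0 < (1 - α) * (Qt T (D, D) C - dv) := mul_pos (by linarith) (by linarith)
    have ha2 : 0 < α * (rCC + γ * c0 - dv) := mul_pos hα0 (by linarith)
    have e : Qt T (D, D) C + α * (rCC + γ * c0 - Qt T (D, D) C) - dv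
        = (1 - α) * (Qt T (D, D) C - dv) + α * (rCC + γ * c0 - dv) := by ring
    linarith [ha1, ha2, e]
  have hyT1 : Qt (T + 1) (C, C) D = Qt T (C, C) D := hpresT _ _ (by decide)
  have hccT1 : Qt (T + 1) (C, C) C = c0 := by
    rw [hpresT _ _ (by decide)]; exact hccT
  have hrr : (1 - γ) * (rCC / (1 - γ)) = rCC := by field_simp
  -- Phase 3 : absorbed in (C,C)
  have key3 : ∀ j : ℕ,
      s (T + 1 + j) = (C, C) ∧
      (∀ p b, ¬(p = (C, C) ∧ b = C) → Qt (T + 1 + j) p b = Qt (T + 1) p b) ∧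
      c0 ≤ Qt (T + 1 + j) (C, C) C ∧ Qt (T + 1 + j) (C, C) C < rCC / (1 - γ) := by
    intro j
    induction j with
    | zero =>
      refine ⟨hsT1, fun p b _ => rfl, ?_, ?_⟩
      · rw [show T + 1 + 0 = T + 1 from rfl, hccT1]
      · rw [show T + 1 + 0 = T + 1 from rfl, hccT1]; exact hiii
    | succ j ihj =>
      obtain ⟨hsj, hfrj, hcj1, hcj2⟩ := ihj
      have hyj : Qt (T + 1 + j) (C, C) D = Qt T (C, C) D := by
        rw [hfrj (C, C) D (by decide)]; exact hyT1
      have hgt : Qt (T + 1 + j) (C, C) D < Qt (T + 1 + j) (C, C) C := by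
        rw [hyj]; linarith
      have haj : a (T + 1 + j) = C := by rw [ha, hsj]; exact gC _ _ hgt
      have hsj1 : s (T + 1 + j + 1) = (C, C) := by rw [hs, haj]
      have hupdj : Qt (T + 1 + j + 1) (C, C) C =
          Qt (T + 1 + j) (C, C) C
            + α * (rCC + γ * Qt (T + 1 + j) (C, C) C - Qt (T + 1 + j) (C, C) C) := by
        have h := hupd (T + 1 + j)
        rw [hsj, haj, hsj1, hrCC, max_eq_left (le_of_lt hgt)] at h
        exact h
      have hpresj : ∀ p b, ¬(p = (C, C) ∧ b = C) →
          Qt (T + 1 + j + 1) p b = Qt (T + 1 + j) p b :=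
        fun p b hpb => hsame _ p b (by rw [hsj, haj]; exact hpb)
      rw [show T + 1 + (j + 1) = T + 1 + j + 1 by omega]
      refine ⟨hsj1, ?_, ?_, ?_⟩
      · intro p b hpb; rw [hpresj p b hpb]; exact hfrj p b hpb
      · rw [hupdj]
        have hnn : 0 ≤ α * (1 - γ) * (rCC / (1 - γ) - Qt (T + 1 + j) (C, C) C) :=
          mul_nonneg (mul_nonneg hα0.le hγ'.le) (by linarith)
        have e : α * (rCC + γ * Qt (T + 1 + j) (C, C) C - Qt (T + 1 + j) (C, C) C)
            = α * (1 - γ) * (rCC / (1 - γ) - Qt (T + 1 + j) (C, C) C) := by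
          field_simp
          ring
        linarith [hnn, hcj1, e]
      · rw [hupdj]
        have hpr : 0 < (1 - α * (1 - γ)) * (rCC / (1 - γ) - Qt (T + 1 + j) (C, C) C) :=
          mul_pos (by rw [hρ] at hρ0; exact hρ0) (by linarith)
        have e : α * (rCC + γ * Qt (T + 1 + j) (C, C) C - Qt (T + 1 + j) (C, C) C)
            = α * (1 - γ) * (rCC / (1 - γ) - Qt (T + 1 + j) (C, C) C) := by
          field_simp
          ring
        have e2 : (1 - α * (1 - γ)) * (rCC / (1 - γ) - Qt (T + 1 + j) (C, C) C)
            = (rCC / (1 - γ) - Qt (T + 1 + j) (C, C) C)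
              - α * (1 - γ) * (rCC / (1 - γ) - Qt (T + 1 + j) (C, C) C) := by ring
        linarith [hpr, e, e2]
  -- conclusion
  refine ⟨T + 1, ?_⟩
  intro t ht
  obtain ⟨j, rfl⟩ := Nat.exists_eq_add_of_le ht
  obtain ⟨hsj, hfrj, hcj1, hcj2⟩ := key3 j
  have hyj : Qt (T + 1 + j) (C, C) D = Qt T (C, C) D := by
    rw [hfrj (C, C) D (by decide)]; exact hyT1
  refine ⟨?_, ?_, ?_, ?_⟩
  · rw [hyj]; linarith
  · have hC : Qt (T + 1 + j) (D, D) C = Qt (T + 1) (D, D) C := hfrj _ _ (by decide)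
    have hD : Qt (T + 1 + j) (D, D) D = dv := by
      rw [hfrj _ _ (by decide), hpresT _ _ (by decide)]; exact hddT
    rw [hC, hD]; exact hxT1
  · have e1 : Qt (T + 1 + j) (C, D) D = Qt 0 (C, D) D := by
      rw [hfrj _ _ (by decide), hpresT _ _ (by decide),
        hfrk _ _ (by decide) (by decide), hfr1 _ _ (by decide)]
    have e2 : Qt (T + 1 + j) (C, D) C = Qt 0 (C, D) C := by
      rw [hfrj _ _ (by decide), hpresT _ _ (by decide),
        hfrk _ _ (by decide) (by decide), hfr1 _ _ (by decide)]
    rw [e1, e2]; exact hADcd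
  · have e1 : Qt (T + 1 + j) (D, C) D = Qt 0 (D, C) D := by
      rw [hfrj _ _ (by decide), hpresT _ _ (by decide),
        hfrk _ _ (by decide) (by decide), hfr1 _ _ (by decide)]
    have e2 : Qt (T + 1 + j) (D, C) C = Qt 0 (D, C) C := by
      rw [hfrj _ _ (by decide), hpresT _ _ (by decide),
        hfrk _ _ (by decide) (by decide), hfr1 _ _ (by decide)]
    rw [e1, e2]; exact hADdc
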